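/- Fix a finite nonempty alphabet Σ equipped with a linear order and a fresh event tock ∉ Σ; work with finite linear observations over Σ ∪ {tock}. A discrete timed failure over Σ is a sequence (s₀, X₀, tock, s₁, X₁, tock, …, s_{n-1}, X_{n-1}, tock, sₙ, Xₙ) where each sᵢ ∈ Σ* and each Xᵢ for i < n is a subset of Σ, while Xₙ is a subset of Σ or the symbol •. Define the relation D_Σ, relating a finite linear observation ⟨A₀,a₁,A₁,…,a_m,A_m⟩ over Σ ∪ {tock} to every discrete timed failure obtained as follows: the events a₁,…,a_m, split at the occurrences of tock, yield the blocks s₀,…,sₙ (which contain no tock); for each occurrence of tock, the refusal recorded before it is any X ⊆ Σ \ A if the annotation A immediately preceding that tock is a set, and any X ⊆ Σ if that annotation is •; and the final refusal Xₙ is any X ⊆ Σ \ A_m if A_m ≠ • and is • if A_m = •. Encode observations by the canonical encoding φ over Ξ := (Σ ∪ {tock}) ⊕ Σ'' ⊕ Sym, and encode discrete timed failures over Θ := (Σ ∪ {tock}) ⊕ Σ' ⊕ Sym by ψ(s₀,X₀,tock,…,sₙ,Xₙ) = s₀ enc(X₀) tock s₁ enc(X₁) tock … sₙ enc(Xₙ),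 where enc(•) is the empty word and enc(X) is the symbol ⟨ followed by the primed copies of the elements of X in increasing order followed by the symbol ⟩. Then there exists a nondeterministic finite automaton with finitely many states over the alphabet Ξ ⊕ Θ recognising the relation {(φ(x), ψ(y)) : (x, y) ∈ D_Σ}. -/

import Mathlib

/-- A finite linear observation over alphabet `α`: an initial annotation `A₀`
(`none` = `•`, `some A` = a stable acceptance set) together with a list of pairs
`(aᵢ, Aᵢ)` of an event and the following annotation. -/
abbrev FLObs (α : Type) := Option (Finset α) × List (α × Option (Finset α))

/-- Extension on annotations: either they are equal or the first is `•`. -/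
def optExt {α : Type} (A B : Option (Finset α)) : Prop := A = B ∨ A = none

/-- The extension order on finite linear observations. -/
def extLE {α : Type} (u v : FLObs α) : Prop :=
  optExt u.1 v.1 ∧ u.2.length ≤ v.2.length ∧
    ∀ (i : ℕ) (hi : i < u.2.length) (hj : i < v.2.length),
      (u.2.get ⟨i, hi⟩).1 = (v.2.get ⟨i, hj⟩).1 ∧
        optExt (u.2.get ⟨i, hi⟩).2 (v.2.get ⟨i, hj⟩).2

/-- The four symbols `⟨`, `⟩`, `,`, `•` used by the canonical encoding. -/
inductive MSym : Type
  | lang | rang | comma | bullet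
deriving DecidableEq

instance : Fintype MSym where
  elems := {MSym.lang, MSym.rang, MSym.comma, MSym.bullet}
  complete := fun x => by cases x <;> simp

/-- The alphabet `Ξ = Σ ⊕ Σ'' ⊕ MSym` of the canonical encoding: `Sum.inl a` is the
event `a`, `Sum.inr (Sum.inl a)` is the double-primed copy `a''`, and
`Sum.inr (Sum.inr s)` is a symbol. -/
abbrev Xi (α : Type) := α ⊕ α ⊕ MSym

/-- Encoding of an annotation: `•` is the symbol `•`, a set is the list of the
double-primed copies of its elements in increasing order. -/
def encAnnXi {α : Type} [LinearOrder α] : Option (Finset α) → List (Xi α)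
  | none => [Sum.inr (Sum.inr MSym.bullet)]
  | some A => (A.sort (· ≤ ·)).map (fun a => Sum.inr (Sum.inl a))

/-- The canonical encoding `φ` of finite linear observations: the observation
`⟨A₀, a₁, A₁, …, aₙ, Aₙ⟩` is written as the string `⟨ A₀ , a₁ , A₁ , … , aₙ , Aₙ ⟩`. -/
def phi {α : Type} [LinearOrder α] (u : FLObs α) : List (Xi α) :=
  [Sum.inr (Sum.inr MSym.lang)] ++ encAnnXi u.1 ++
    (u.2.map (fun p => [Sum.inr (Sum.inr MSym.comma), Sum.inl p.1,
      Sum.inr (Sum.inr MSym.comma)] ++ encAnnXi p.2)).flatten ++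
    [Sum.inr (Sum.inr MSym.rang)]

/-- An NFA over `α ⊕ β` recognises a relation `R ⊆ α* × β*` if `R s t` holds exactly
when the NFA accepts some interleaving of `s` (as left letters) and `t` (as right
letters). -/
def Recognises {α β Q : Type} (A : NFA (α ⊕ β) Q) (R : List α → List β → Prop) : Prop :=
  ∀ (s : List α) (t : List β),
    R s t ↔ ∃ w ∈ A.accepts, w.filterMap Sum.getLeft? = s ∧ w.filterMap Sum.getRight? = t

/-- The relation on `O` induced by a relation `M : S → O → Prop` from a preorder
`le` on `S`. -/
def inducedRel {S O : Type} (le : S → S → Prop) (M : S → O → Prop) (y₁ y₂ : O) : Prop :=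
  ∀ b, M b y₂ → ∃ a, M a y₁ ∧ le a b

/-- The final annotation `Aₙ` of an observation. -/
def lastAnn {α : Type} (u : FLObs α) : Option (Finset α) :=
  match u.2.getLast? with
  | none => u.1
  | some p => p.2


/-- The alphabet `Σ ∪ {tock}`: we use `WithBot α`, with `⊥` playing the role of the
fresh event `tock` and `(a : WithBot α)` the event `a ∈ Σ`. -/
abbrev Tocked (α : Type) := WithBot α

/-- The annotation reached after reading the items of `l`, starting from `prev`:
the annotation of the last item of `l`, or `prev` if `l` is empty. -/
def lastAnnFrom {γ : Type} (prev : Option (Finset γ)) (l : List (γ × Option (Finset γ))) :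
    Option (Finset γ) :=
  match l.getLast? with
  | none => prev
  | some p => p.2

/-- Compatibility of the final refusal of a discrete timed failure with the final
annotation of the observation: if the annotation is `•` the refusal is `•`; if the
annotation is an acceptance set `A` then the refusal is a set `X ⊆ Σ \ A`. -/
def annCompatD {α : Type} (A : Option (Finset (Tocked α))) (X : Option (Finset α)) : Prop :=
  match A, X with
  | none, none => True
  | some A, some Y => ∀ a ∈ Y, (a : Tocked α) ∉ A
  | _, _ => False

/-- Compatibility of a refusal recorded before a `tock` with the annotation `A`
immediately preceding that `tock`: any `X ⊆ Σ \ A` if `A` is a set, and any `X ⊆ Σ`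
if `A = •`. -/
def refCompatD {α : Type} (A : Option (Finset (Tocked α))) (X : Finset α) : Prop :=
  match A with
  | none => True
  | some S => ∀ a ∈ X, (a : Tocked α) ∉ S

/-- A discrete timed failure `(s₀, X₀, tock, s₁, X₁, tock, …, sₙ, Xₙ)` over `Σ`:
the list of blocks `(sᵢ, Xᵢ)` (`i < n`, each `sᵢ ∈ Σ*` and `Xᵢ ⊆ Σ`) followed by the
final block `sₙ` and final refusal `Xₙ ⊆ Σ` or `•` (`none`). -/
abbrev DTF (α : Type) := List (List α × Finset α) × (List α × Option (Finset α))

/-- The relation `D_Σ`, relating a finite linear observation over `Σ ∪ {tock}`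
(split as an initial annotation `prev` and a list of items `l`) to a discrete timed
failure: the events, split at the occurrences of `tock`, yield the blocks
`s₀, …, sₙ` (containing no `tock`); the refusal recorded before each `tock` is any
`X ⊆ Σ \ A` where `A` is the annotation immediately preceding that `tock` (any
`X ⊆ Σ` if `A = •`); and the final refusal is any `X ⊆ Σ \ A_m` if the final
annotation `A_m ≠ •`, and is `•` if `A_m = •`. -/
inductive DTFRel {α : Type} :
    Option (Finset (Tocked α)) → List (Tocked α × Option (Finset (Tocked α))) →
      DTF α → Prop
  | last (prev : Option (Finset (Tocked α)))
      (l : List (Tocked α × Option (Finset (Tocked α))))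
      (s : List α) (X : Option (Finset α))
      (hev : l.map Prod.fst = s.map (fun a => (a : Tocked α)))
      (hX : annCompatD (lastAnnFrom prev l) X) :
      DTFRel prev l ([], (s, X))
  | step (prev : Option (Finset (Tocked α)))
      (l₁ : List (Tocked α × Option (Finset (Tocked α))))
      (At : Option (Finset (Tocked α)))
      (l₂ : List (Tocked α × Option (Finset (Tocked α))))
      (s : List α) (X : Finset α) (rest : List (List α × Finset α))
      (fin : List α × Option (Finset α))
      (hev : l₁.map Prod.fst = s.map (fun a => (a : Tocked α)))
      (hX : refCompatD (lastAnnFrom prev l₁) X)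
      (hrec : DTFRel At l₂ (rest, fin)) :
      DTFRel prev (l₁ ++ ((⊥ : Tocked α), At) :: l₂) ((s, X) :: rest, fin)

/-- The output alphabet `Θ = (Σ ∪ {tock}) ⊕ Σ' ⊕ Sym` for discrete timed failures. -/
abbrev ThetaD (α : Type) := Tocked α ⊕ α ⊕ MSym

/-- `enc X`: the symbol `⟨` followed by the primed copies of the elements of `X` in
increasing order followed by the symbol `⟩`. -/
def encRefD {α : Type} [LinearOrder α] (X : Finset α) : List (ThetaD α) :=
  [Sum.inr (Sum.inr MSym.lang)] ++
    (X.sort (· ≤ ·)).map (fun a => Sum.inr (Sum.inl a)) ++ [Sum.inr (Sum.inr MSym.rang)]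

/-- The output encoding of a discrete timed failure:
`ψ (s₀, X₀, tock, …, sₙ, Xₙ) = s₀ enc(X₀) tock s₁ enc(X₁) tock … sₙ enc(Xₙ)`,
where `enc (•)` is the empty word. -/
def psiD {α : Type} [LinearOrder α] (y : DTF α) : List (ThetaD α) :=
  (y.1.map (fun p => p.1.map (fun a => Sum.inl (a : Tocked α)) ++ encRefD p.2 ++
      [Sum.inl (⊥ : Tocked α)])).flatten ++
    y.2.1.map (fun a => Sum.inl (a : Tocked α)) ++
    (match y.2.2 with
     | none => []
     | some X => encRefD X)


set_option linter.unusedSectionVars false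
namespace Stmt14

/-- States of the recognising automaton. -/
inductive St (α : Type) : Type
  | start
  | ann (A : Option (Finset (Tocked α))) (last : Option (Tocked α))
  | expectEvent
  | expectTock
  | e2 (a : Tocked α)
  | e3 (a : Tocked α)
  | ref (A : Option (Finset (Tocked α))) (lastX : Option α)
  | afterRef
  | fin (A : Option (Finset (Tocked α)))
  | fref (S : Finset (Tocked α)) (lastX : Option α)
  | acc

variable {α : Type} [LinearOrder α]

/-- Injective encoding of states, for finiteness. -/
def St.enc : St α → Fin 11 × Option (Finset (Tocked α)) × Option (Tocked α)
    × Option α × Finset (Tocked α)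
  | .start => (0, none, none, none, ∅)
  | .ann A last => (1, A, last, none, ∅)
  | .expectEvent => (2, none, none, none, ∅)
  | .expectTock => (3, none, none, none, ∅)
  | .e2 a => (4, none, some a, none, ∅)
  | .e3 a => (5, none, some a, none, ∅)
  | .ref A lastX => (6, A, none, lastX, ∅)
  | .afterRef => (7, none, none, none, ∅)
  | .fin A => (8, A, none, none, ∅)
  | .fref S lastX => (9, none, none, lastX, S)
  | .acc => (10, none, none, none, ∅)

lemma St.enc_injective : Function.Injective (St.enc (α := α)) := by
  intro x y h
  cases x <;> cases y <;> simp_all [St.enc]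

instance instFintypeTocked [Fintype α] : Fintype (Tocked α) :=
  inferInstanceAs (Fintype (Option α))

noncomputable instance fintypeSt [Fintype α] : Fintype (St α) :=
  Fintype.ofInjective _ St.enc_injective

def optLTb {β : Type} [LinearOrder β] (o : Option β) (b : β) : Bool :=
  match o with
  | none => true
  | some c => decide (c < b)

def refOKb (A : Option (Finset (Tocked α))) (b : α) : Bool :=
  match A with
  | none => true
  | some S => decide ((b : Tocked α) ∉ S)

/-- The (deterministic, partial) transition function. -/
def tr : St α → (Xi (Tocked α) ⊕ ThetaD α) → Option (St α)
  | .start, Sum.inl (Sum.inr (Sum.inr MSym.lang)) => some (.ann (some ∅) none)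
  | .ann (some S) last, Sum.inl (Sum.inr (Sum.inl a)) =>
      if optLTb last a then some (.ann (some (insert a S)) (some a)) else none
  | .ann (some S) last, Sum.inl (Sum.inr (Sum.inr MSym.bullet)) =>
      if S = ∅ ∧ last = none then some (.ann none none) else none
  | .ann _ _, Sum.inl (Sum.inr (Sum.inr MSym.comma)) => some .expectEvent
  | .ann A _, Sum.inl (Sum.inr (Sum.inr MSym.rang)) => some (.fin A)
  | .ann A _, Sum.inr (Sum.inr (Sum.inr MSym.lang)) => some (.ref A none)
  | .expectEvent, Sum.inl (Sum.inl a) => if a = ⊥ then none else some (.e2 a)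
  | .expectTock, Sum.inl (Sum.inl a) => if a = ⊥ then some (.e2 a) else none
  | .e2 a, Sum.inl (Sum.inr (Sum.inr MSym.comma)) => some (.e3 a)
  | .e3 a, Sum.inr (Sum.inl b) => if b = a then some (.ann (some ∅) none) else none
  | .ref A lastX, Sum.inr (Sum.inr (Sum.inl b)) =>
      if optLTb lastX b && refOKb A b then some (.ref A (some b)) else none
  | .ref _ _, Sum.inr (Sum.inr (Sum.inr MSym.rang)) => some .afterRef
  | .afterRef, Sum.inl (Sum.inr (Sum.inr MSym.comma)) => some .expectTock
  | .fin (some S), Sum.inr (Sum.inr (Sum.inr MSym.lang)) => some (.fref S none)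
  | .fref S lastX, Sum.inr (Sum.inr (Sum.inl b)) =>
      if optLTb lastX b && decide ((b : Tocked α) ∉ S) then some (.fref S (some b)) else none
  | .fref _ _, Sum.inr (Sum.inr (Sum.inr MSym.rang)) => some .acc
  | _, _ => none

/-- Deterministic run. -/
def runO (q : Option (St α)) (w : List (Xi (Tocked α) ⊕ ThetaD α)) : Option (St α) :=
  w.foldl (fun s l => s.bind (fun q => tr q l)) q

@[simp] lemma runO_nil (q : Option (St α)) : runO q [] = q := rfl

@[simp] lemma runO_cons (q : Option (St α)) (a w) :
    runO q (a :: w) = runO (q.bind (fun s => tr s a)) w := rfl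

@[simp] lemma runO_none (w : List (Xi (Tocked α) ⊕ ThetaD α)) : runO none w = none := by
  induction w with
  | nil => rfl
  | cons a w ih => simpa [runO] using ih

@[simp] lemma runO_append (q : Option (St α)) (w₁ w₂) :
    runO q (w₁ ++ w₂) = runO (runO q w₁) w₂ := by
  simp [runO, List.foldl_append]

/-- Accepting states. -/
def acceptP (q : St α) : Prop := q = St.fin none ∨ q = St.acc

end Stmt14

namespace Stmt14
set_option linter.unusedSectionVars false
variable {α : Type} [LinearOrder α]

/-! ### Projections -/

def LPr (w : List (Xi (Tocked α) ⊕ ThetaD α)) : List (Xi (Tocked α)) :=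
  w.filterMap Sum.getLeft?

def RPr (w : List (Xi (Tocked α) ⊕ ThetaD α)) : List (ThetaD α) :=
  w.filterMap Sum.getRight?

@[simp] lemma LPr_nil : LPr ([] : List (Xi (Tocked α) ⊕ ThetaD α)) = [] := rfl
@[simp] lemma RPr_nil : RPr ([] : List (Xi (Tocked α) ⊕ ThetaD α)) = [] := rfl
@[simp] lemma LPr_cons_inl (x : Xi (Tocked α)) (w) : LPr (Sum.inl x :: w) = x :: LPr w := by
  simp [LPr]
@[simp] lemma LPr_cons_inr (y : ThetaD α) (w) : LPr (Sum.inr y :: w) = LPr w := by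
  rfl
@[simp] lemma RPr_cons_inl (x : Xi (Tocked α)) (w) : RPr (Sum.inl x :: w) = RPr w := by
  rfl
@[simp] lemma RPr_cons_inr (y : ThetaD α) (w) : RPr (Sum.inr y :: w) = y :: RPr w := by
  simp [RPr]
@[simp] lemma LPr_append (w₁ w₂) :
    LPr (α := α) (w₁ ++ w₂) = LPr w₁ ++ LPr w₂ := by simp [LPr]
@[simp] lemma RPr_append (w₁ w₂) :
    RPr (α := α) (w₁ ++ w₂) = RPr w₁ ++ RPr w₂ := by simp [RPr]
@[simp] lemma LPr_map_inl (l : List (Xi (Tocked α))) :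
    LPr (α := α) (l.map Sum.inl) = l := by
  induction l with
  | nil => rfl
  | cons a l ih => simp [ih]
@[simp] lemma RPr_map_inl (l : List (Xi (Tocked α))) :
    RPr (α := α) (l.map Sum.inl) = [] := by
  induction l with
  | nil => rfl
  | cons a l ih => simp [ih]

/-! ### Sorted lists -/

lemma toFinset_sort_eq {β : Type} [LinearOrder β] {l : List β} (h : l.Chain' (· < ·)) :
    (l.toFinset.sort (· ≤ ·)) = l := by
  have hs : l.Pairwise (· < ·) := List.isChain_iff_pairwise.mp h
  exact (List.toFinset_sort _ hs.nodup).mpr (hs.imp le_of_lt)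

lemma sort_chain'_lt {β : Type} [LinearOrder β] (S : Finset β) :
    (S.sort (· ≤ ·)).Chain' (· < ·) :=
  List.isChain_iff_pairwise.mpr (S.sortedLT_sort).pairwise

/-! ### Canonical words -/

def annW (A : Option (Finset (Tocked α))) : List (Xi (Tocked α) ⊕ ThetaD α) :=
  (encAnnXi A).map Sum.inl

def xComma : Xi (Tocked α) := Sum.inr (Sum.inr MSym.comma)

def itemW (p : Tocked α × Option (Finset (Tocked α))) : List (Xi (Tocked α) ⊕ ThetaD α) :=
  [Sum.inl xComma, Sum.inl (Sum.inl p.1), Sum.inl xComma, Sum.inr (Sum.inl p.1)] ++ annW p.2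

def itemsW (l : List (Tocked α × Option (Finset (Tocked α)))) :
    List (Xi (Tocked α) ⊕ ThetaD α) :=
  (l.map itemW).flatten

def refW (X : Finset α) : List (Xi (Tocked α) ⊕ ThetaD α) :=
  Sum.inr (Sum.inr (Sum.inr MSym.lang)) ::
    (X.sort (· ≤ ·)).map (fun b => Sum.inr (Sum.inr (Sum.inl b))) ++
    [Sum.inr (Sum.inr (Sum.inr MSym.rang))]

def itemsEnc (l : List (Tocked α × Option (Finset (Tocked α)))) : List (Xi (Tocked α)) :=
  (l.map (fun p => [Sum.inr (Sum.inr MSym.comma), Sum.inl p.1,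
      Sum.inr (Sum.inr MSym.comma)] ++ encAnnXi p.2)).flatten

@[simp] lemma itemsEnc_nil : itemsEnc ([] : List (Tocked α × Option (Finset (Tocked α)))) = [] :=
  rfl

@[simp] lemma itemsEnc_cons (p) (l : List (Tocked α × Option (Finset (Tocked α)))) :
    itemsEnc (p :: l) = [Sum.inr (Sum.inr MSym.comma), Sum.inl p.1,
      Sum.inr (Sum.inr MSym.comma)] ++ encAnnXi p.2 ++ itemsEnc l := by
  simp [itemsEnc]

@[simp] lemma itemsEnc_append (l₁ l₂ : List (Tocked α × Option (Finset (Tocked α)))) :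
    itemsEnc (l₁ ++ l₂) = itemsEnc l₁ ++ itemsEnc l₂ := by
  simp [itemsEnc]

@[simp] lemma LPr_itemsW (l : List (Tocked α × Option (Finset (Tocked α)))) :
    LPr (itemsW l) = itemsEnc l := by
  induction l with
  | nil => rfl
  | cons p l ih =>
      simp only [itemsW, List.map_cons, List.flatten_cons] at ih ⊢
      simp [itemW, annW, xComma, ih, itemsEnc_cons]

@[simp] lemma RPr_itemsW (l : List (Tocked α × Option (Finset (Tocked α)))) :
    RPr (itemsW l) = (l.map Prod.fst).map Sum.inl := by
  induction l with
  | nil => rfl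
  | cons p l ih =>
      simp only [itemsW, List.map_cons, List.flatten_cons] at ih ⊢
      simp [itemW, annW, ih, List.map_map]

@[simp] lemma LPr_refW (X : Finset α) : LPr (α := α) (refW X) = [] := by
  simp [refW]
  induction (X.sort (· ≤ ·)) with
  | nil => rfl
  | cons b l ih => simpa using ih

@[simp] lemma RPr_refW (X : Finset α) : RPr (α := α) (refW X) = encRefD X := by
  simp [refW, encRefD]
  induction (X.sort (· ≤ ·)) with
  | nil => rfl
  | cons b l ih => simp_all

@[simp] lemma LPr_annW (A : Option (Finset (Tocked α))) : LPr (annW A) = encAnnXi A := by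
  simp [annW]

@[simp] lemma RPr_annW (A : Option (Finset (Tocked α))) : RPr (annW A) = [] := by
  simp [annW]

end Stmt14

namespace Stmt14
set_option linter.unusedSectionVars false
variable {α : Type} [LinearOrder α]

/-! ### Transition simp lemmas -/

@[simp] lemma tr_start_lang :
    tr (St.start : St α) (Sum.inl (Sum.inr (Sum.inr MSym.lang))) = some (.ann (some ∅) none) :=
  rfl

@[simp] lemma tr_ann_dbl (S : Finset (Tocked α)) (last a) :
    tr (St.ann (some S) last) (Sum.inl (Sum.inr (Sum.inl a)))
      = if optLTb last a then some (.ann (some (insert a S)) (some a)) else none := rfl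

@[simp] lemma tr_ann_bullet (S : Finset (Tocked α)) (last) :
    tr (St.ann (some S) last) (Sum.inl (Sum.inr (Sum.inr MSym.bullet)))
      = if S = ∅ ∧ last = none then some (.ann none none) else none := rfl

@[simp] lemma tr_ann_comma (A : Option (Finset (Tocked α))) (last) :
    tr (St.ann A last) (Sum.inl (Sum.inr (Sum.inr MSym.comma))) = some .expectEvent := by
  cases A <;> rfl

@[simp] lemma tr_ann_rang (A : Option (Finset (Tocked α))) (last) :
    tr (St.ann A last) (Sum.inl (Sum.inr (Sum.inr MSym.rang))) = some (.fin A) := by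
  cases A <;> rfl

@[simp] lemma tr_ann_rlang (A : Option (Finset (Tocked α))) (last) :
    tr (St.ann A last) (Sum.inr (Sum.inr (Sum.inr MSym.lang))) = some (.ref A none) := by
  cases A <;> rfl

@[simp] lemma tr_expectEvent (a : Tocked α) :
    tr (St.expectEvent : St α) (Sum.inl (Sum.inl a))
      = if a = ⊥ then none else some (.e2 a) := rfl

@[simp] lemma tr_expectTock (a : Tocked α) :
    tr (St.expectTock : St α) (Sum.inl (Sum.inl a))
      = if a = ⊥ then some (.e2 a) else none := rfl

@[simp] lemma tr_e2 (a : Tocked α) :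
    tr (St.e2 a) (Sum.inl (Sum.inr (Sum.inr MSym.comma))) = some (.e3 a) := rfl

@[simp] lemma tr_e3 (a b : Tocked α) :
    tr (St.e3 a) (Sum.inr (Sum.inl b))
      = if b = a then some (.ann (some ∅) none) else none := rfl

@[simp] lemma tr_ref_rp (A : Option (Finset (Tocked α))) (lastX) (b : α) :
    tr (St.ref A lastX) (Sum.inr (Sum.inr (Sum.inl b)))
      = if optLTb lastX b && refOKb A b then some (.ref A (some b)) else none := rfl

@[simp] lemma tr_ref_rrang (A : Option (Finset (Tocked α))) (lastX) :
    tr (St.ref A lastX) (Sum.inr (Sum.inr (Sum.inr MSym.rang))) = some .afterRef := rfl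

@[simp] lemma tr_afterRef :
    tr (St.afterRef : St α) (Sum.inl (Sum.inr (Sum.inr MSym.comma))) = some .expectTock := rfl

@[simp] lemma tr_fin_rlang (S : Finset (Tocked α)) :
    tr (St.fin (some S)) (Sum.inr (Sum.inr (Sum.inr MSym.lang))) = some (.fref S none) := rfl

@[simp] lemma tr_fref_rp (S : Finset (Tocked α)) (lastX) (b : α) :
    tr (St.fref S lastX) (Sum.inr (Sum.inr (Sum.inl b)))
      = if optLTb lastX b && decide ((b : Tocked α) ∉ S) then some (.fref S (some b)) else none :=
  rfl

@[simp] lemma tr_fref_rrang (S : Finset (Tocked α)) (lastX) :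
    tr (St.fref S lastX) (Sum.inr (Sum.inr (Sum.inr MSym.rang))) = some .acc := rfl

/-! ### Forward run lemmas -/

lemma run_annList : ∀ (lst : List (Tocked α)) (S : Finset (Tocked α)) (last : Option (Tocked α)),
    lst.Chain' (· < ·) → (∀ c ∈ last, ∀ x ∈ lst.head?, c < x) →
    ∃ la, runO (some (.ann (some S) last))
        (lst.map (fun a => Sum.inl (Sum.inr (Sum.inl a))))
      = some (.ann (some (S ∪ lst.toFinset)) la) := by
  intro lst
  induction lst with
  | nil => intro S last _ _; exact ⟨last, by simp⟩
  | cons a rest ih =>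
    intro S last hch hhd
    have hg : optLTb last a = true := by
      cases last with
      | none => rfl
      | some c => simpa [optLTb] using hhd c rfl a rfl
    obtain ⟨hhd', hch'⟩ := List.isChain_cons.mp hch
    obtain ⟨la, hla⟩ := ih (insert a S) (some a) hch' (by simpa using hhd')
    refine ⟨la, ?_⟩
    simp only [List.map_cons, runO_cons, Option.bind_some, tr_ann_dbl, hg, if_true]
    rw [hla]
    congr 2
    simp [Finset.union_insert, Finset.insert_union]

lemma run_annW (A : Option (Finset (Tocked α))) :
    ∃ la, runO (some (.ann (some ∅) none)) (annW A) = some (.ann A la) := by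
  cases A with
  | none =>
    refine ⟨none, ?_⟩
    simp [annW, encAnnXi]
  | some S =>
    obtain ⟨la, hla⟩ := run_annList (S.sort (· ≤ ·)) ∅ none (sort_chain'_lt S)
      (by simp)
    refine ⟨la, ?_⟩
    simpa [annW, encAnnXi, List.map_map, Function.comp_def] using hla

lemma lastAnnFrom_cons (prev A : Option (Finset (Tocked α))) (a : Tocked α)
    (t : List (Tocked α × Option (Finset (Tocked α)))) :
    lastAnnFrom prev ((a, A) :: t) = lastAnnFrom A t := by
  cases t with
  | nil => simp [lastAnnFrom]
  | cons p t =>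
    show (match ((a, A) :: p :: t).getLast? with
        | none => prev | some q => q.2) = _
    rw [List.getLast?_cons_cons]
    rfl

lemma run_items : ∀ (l : List (Tocked α × Option (Finset (Tocked α)))) (s : List α)
    (prev : Option (Finset (Tocked α))) (la : Option (Tocked α)),
    l.map Prod.fst = s.map (fun a => (a : Tocked α)) →
    ∃ la', runO (some (.ann prev la)) (itemsW l) = some (.ann (lastAnnFrom prev l) la') := by
  intro l
  induction l with
  | nil => intro s prev la _; exact ⟨la, by simp [itemsW, lastAnnFrom]⟩
  | cons p t ih =>
    obtain ⟨a, A⟩ := p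
    intro s prev la hev
    cases s with
    | nil =>
      rw [show (([] : List α).map (fun a => (a : Tocked α)) = []) from rfl] at hev
      simp at hev
    | cons b s' =>
      rw [List.map_cons, show ((b :: s').map (fun a => (a : Tocked α))
        = (b : Tocked α) :: s'.map (fun a => (a : Tocked α))) from rfl] at hev
      simp only [List.cons.injEq] at hev
      obtain ⟨ha, hev'⟩ := hev
      subst ha
      obtain ⟨la₂, h2⟩ := run_annW A
      obtain ⟨la', h3⟩ := ih s' A la₂ hev'
      refine ⟨la', ?_⟩
      have : itemsW (((b : Tocked α), A) :: t) = itemW ((b : Tocked α), A) ++ itemsW t := by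
        simp [itemsW]
      rw [this, runO_append]
      have h4 : runO (some (.ann prev la)) (itemW ((b : Tocked α), A)) = some (.ann A la₂) := by
        simp only [itemW, xComma, List.append_assoc, List.cons_append, List.nil_append,
          runO_cons, Option.bind_some, tr_ann_comma, tr_expectEvent, tr_e2, tr_e3,
          WithBot.coe_ne_bot, if_neg, if_pos]
        simpa using h2
      rw [h4, h3, lastAnnFrom_cons]

lemma run_refList : ∀ (lst : List α) (A : Option (Finset (Tocked α))) (lastX : Option α),
    lst.Chain' (· < ·) → (∀ c ∈ lastX, ∀ x ∈ lst.head?, c < x) →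
    (∀ b ∈ lst, refOKb A b = true) →
    ∃ lx, runO (some (.ref A lastX))
        (lst.map (fun b => Sum.inr (Sum.inr (Sum.inl b))))
      = some (.ref A lx) := by
  intro lst
  induction lst with
  | nil => intro A lastX _ _ _; exact ⟨lastX, by simp⟩
  | cons b rest ih =>
    intro A lastX hch hhd hok
    have hg : optLTb lastX b = true := by
      cases lastX with
      | none => rfl
      | some c => simpa [optLTb] using hhd c rfl b rfl
    obtain ⟨hhd', hch'⟩ := List.isChain_cons.mp hch
    obtain ⟨lx, hlx⟩ := ih A (some b) hch' (by simpa using hhd')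
      (fun c hc => hok c (List.mem_cons_of_mem _ hc))
    refine ⟨lx, ?_⟩
    have hb' : (optLTb lastX b && refOKb A b) = true := by
      simp [hg, hok b List.mem_cons_self]
    simp only [List.map_cons, runO_cons, Option.bind_some, tr_ref_rp, hb', if_true]
    exact hlx

lemma run_refW (A : Option (Finset (Tocked α))) (X : Finset α) (h : refCompatD A X)
    (la : Option (Tocked α)) :
    runO (some (.ann A la)) (refW X) = some St.afterRef := by
  have hok : ∀ b ∈ X.sort (· ≤ ·), refOKb A b = true := by
    intro b hb
    cases A with
    | none => rfl
    | some S =>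
      simp only [refOKb, decide_eq_true_eq]
      exact h b (by simpa using hb)
  obtain ⟨lx, hlx⟩ := run_refList (X.sort (· ≤ ·)) A none (sort_chain'_lt X) (by simp) hok
  simp only [refW, List.cons_append, runO_cons, Option.bind_some, tr_ann_rlang]
  rw [runO_append, hlx]
  simp

lemma run_frefList : ∀ (lst : List α) (S : Finset (Tocked α)) (lastX : Option α),
    lst.Chain' (· < ·) → (∀ c ∈ lastX, ∀ x ∈ lst.head?, c < x) →
    (∀ b ∈ lst, (b : Tocked α) ∉ S) →
    ∃ lx, runO (some (.fref S lastX))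
        (lst.map (fun b => Sum.inr (Sum.inr (Sum.inl b))))
      = some (.fref S lx) := by
  intro lst
  induction lst with
  | nil => intro S lastX _ _ _; exact ⟨lastX, by simp⟩
  | cons b rest ih =>
    intro S lastX hch hhd hok
    have hg : optLTb lastX b = true := by
      cases lastX with
      | none => rfl
      | some c => simpa [optLTb] using hhd c rfl b rfl
    obtain ⟨hhd', hch'⟩ := List.isChain_cons.mp hch
    obtain ⟨lx, hlx⟩ := ih S (some b) hch' (by simpa using hhd')
      (fun c hc => hok c (List.mem_cons_of_mem _ hc))
    refine ⟨lx, ?_⟩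
    have hb' : (optLTb lastX b && decide ((b : Tocked α) ∉ S)) = true := by
      simp [hg, hok b List.mem_cons_self]
    simp only [List.map_cons, runO_cons, Option.bind_some, tr_fref_rp, hb', if_true]
    exact hlx

lemma run_finref (S : Finset (Tocked α)) (Y : Finset α) (h : ∀ b ∈ Y, (b : Tocked α) ∉ S) :
    runO (some (.fin (some S))) (refW Y) = some St.acc := by
  obtain ⟨lx, hlx⟩ := run_frefList (Y.sort (· ≤ ·)) S none (sort_chain'_lt Y) (by simp)
    (fun b hb => h b (by simpa using hb))
  simp only [refW, List.cons_append, runO_cons, Option.bind_some, tr_fin_rlang]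
  rw [runO_append, hlx]
  simp

end Stmt14

namespace Stmt14
set_option linter.unusedSectionVars false
variable {α : Type} [LinearOrder α]

def tockW : List (Xi (Tocked α) ⊕ ThetaD α) :=
  [Sum.inl (Sum.inr (Sum.inr MSym.comma)), Sum.inl (Sum.inl (⊥ : Tocked α)),
   Sum.inl (Sum.inr (Sum.inr MSym.comma)), Sum.inr (Sum.inl (⊥ : Tocked α))]

lemma run_tockW :
    runO (some (St.afterRef : St α)) tockW = some (.ann (some ∅) none) := by
  simp [tockW]

@[simp] lemma LPr_tockW :
    LPr (tockW : List (Xi (Tocked α) ⊕ ThetaD α)) =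
      [Sum.inr (Sum.inr MSym.comma), Sum.inl (⊥ : Tocked α), Sum.inr (Sum.inr MSym.comma)] := by
  simp [tockW]

@[simp] lemma RPr_tockW :
    RPr (tockW : List (Xi (Tocked α) ⊕ ThetaD α)) = [Sum.inl (⊥ : Tocked α)] := by
  simp [tockW]

lemma forward_main {prev : Option (Finset (Tocked α))}
    {items : List (Tocked α × Option (Finset (Tocked α)))} {y : DTF α}
    (h : DTFRel prev items y) : ∀ la, ∃ w q,
    runO (some (.ann prev la)) w = some q ∧ acceptP q ∧
    LPr w = itemsEnc items ++ [Sum.inr (Sum.inr MSym.rang)] ∧ RPr w = psiD y := by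
  induction h with
  | last prev l s X hev hX =>
    intro la
    obtain ⟨la', hrun⟩ := run_items l s prev la hev
    cases hA : lastAnnFrom prev l with
    | none =>
      cases X with
      | some Y => rw [hA] at hX; simp [annCompatD] at hX
      | none =>
        refine ⟨itemsW l ++ [Sum.inl (Sum.inr (Sum.inr MSym.rang))], .fin none, ?_, Or.inl rfl,
          ?_, ?_⟩
        · rw [runO_append, hrun, hA]; simp
        · simp
        · simp [psiD, hev, List.map_map]
    | some S =>
      cases X with
      | none => rw [hA] at hX; simp [annCompatD] at hX
      | some Y =>
        rw [hA] at hX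
        have hY : ∀ b ∈ Y, (b : Tocked α) ∉ S := hX
        refine ⟨itemsW l ++ [Sum.inl (Sum.inr (Sum.inr MSym.rang))] ++ refW Y, .acc, ?_,
          Or.inr rfl, ?_, ?_⟩
        · rw [runO_append, runO_append, hrun, hA]
          simp only [runO_cons, Option.bind_some, tr_ann_rang, runO_nil]
          exact run_finref S Y hY
        · simp
        · simp [psiD, hev, List.map_map]
  | step prev l₁ At l₂ s X rest fn hev hX hrec ih =>
    intro la
    obtain ⟨la', h1⟩ := run_items l₁ s prev la hev
    have h2 := run_refW (lastAnnFrom prev l₁) X hX la'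
    obtain ⟨la₂, h3⟩ := run_annW At
    obtain ⟨w', q, h4, hq, hL, hR⟩ := ih la₂
    refine ⟨itemsW l₁ ++ refW X ++ tockW ++ annW At ++ w', q, ?_, hq, ?_, ?_⟩
    · rw [runO_append, runO_append, runO_append, runO_append, h1, h2, run_tockW, h3, h4]
    · simp [hL, itemsEnc_append, itemsEnc_cons]
    · simp [hR, psiD, hev, List.map_map]

lemma forward_top {x : FLObs (Tocked α)} {y : DTF α} (h : DTFRel x.1 x.2 y) :
    ∃ w q, runO (some (St.start : St α)) w = some q ∧ acceptP q ∧
      LPr w = phi x ∧ RPr w = psiD y := by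
  obtain ⟨la, h1⟩ := run_annW x.1
  obtain ⟨w', q, h2, hq, hL, hR⟩ := forward_main h la
  refine ⟨Sum.inl (Sum.inr (Sum.inr MSym.lang)) :: annW x.1 ++ w', q, ?_, hq, ?_, ?_⟩
  · rw [List.cons_append, runO_cons]
    simp only [Option.bind_some, tr_start_lang]
    rw [runO_append, h1, h2]
  · simp [hL, phi, itemsEnc]
  · simp [hR]

end Stmt14

namespace Stmt14
set_option linter.unusedSectionVars false
variable {α : Type} [LinearOrder α]

/-! ### Backward direction: semantic predicates -/

def Tail (Aprev : Option (Finset (Tocked α))) (wl : List (Xi (Tocked α)))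
    (wr : List (ThetaD α)) : Prop :=
  ∃ items y, DTFRel Aprev items y ∧
    wl = itemsEnc items ++ [Sum.inr (Sum.inr MSym.rang)] ∧ wr = psiD y

def PA (S : Finset (Tocked α)) (last : Option (Tocked α)) (wl : List (Xi (Tocked α)))
    (wr : List (ThetaD α)) : Prop :=
  (∃ (lst : List (Tocked α)) (wl' : List (Xi (Tocked α))),
      wl = lst.map (fun a => Sum.inr (Sum.inl a)) ++ wl' ∧
      (∀ c ∈ last, ∀ x ∈ lst.head?, c < x) ∧ lst.Chain' (· < ·) ∧
      Tail (some (S ∪ lst.toFinset)) wl' wr) ∨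
  (∃ wl', S = ∅ ∧ last = none ∧ wl = Sum.inr (Sum.inr MSym.bullet) :: wl' ∧ Tail none wl' wr)

lemma PA_elim {wl : List (Xi (Tocked α))} {wr} (h : PA ∅ none wl wr) :
    ∃ A' wl', wl = encAnnXi A' ++ wl' ∧ Tail A' wl' wr := by
  rcases h with ⟨lst, wl', heq, _, hch, htail⟩ | ⟨wl', _, _, heq, htail⟩
  · refine ⟨some lst.toFinset, wl', ?_, by simpa using htail⟩
    rw [heq, encAnnXi, toFinset_sort_eq hch]
  · exact ⟨none, wl', by simpa [encAnnXi] using heq, htail⟩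

/-- Prepend a (non-`tock`) event to the first block of a discrete timed failure. -/
def consEv (b : α) : DTF α → DTF α
  | ([], (s, X)) => ([], (b :: s, X))
  | ((s, X) :: rest, fn) => ((b :: s, X) :: rest, fn)

lemma dtf_consEvent {A' : Option (Finset (Tocked α))} {items y} (h : DTFRel A' items y)
    (prev : Option (Finset (Tocked α))) (b : α) :
    DTFRel prev (((b : Tocked α), A') :: items) (consEv b y) := by
  induction h with
  | last prev' l s X hev hX =>
    have h2 := DTFRel.last prev (((b : Tocked α), prev') :: l) (b :: s) X
      (by rw [List.map_cons, show ((b :: s).map (fun a => (a : Tocked α))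
        = (b : Tocked α) :: s.map (fun a => (a : Tocked α))) from rfl, hev])
      (by rwa [lastAnnFrom_cons])
    simpa [consEv] using h2
  | step prev' l₁ At l₂ s X rest fn hev hX hrec ih =>
    have h2 := DTFRel.step prev (((b : Tocked α), prev') :: l₁) At l₂ (b :: s) X rest fn
      (by rw [List.map_cons, show ((b :: s).map (fun a => (a : Tocked α))
        = (b : Tocked α) :: s.map (fun a => (a : Tocked α))) from rfl, hev])
      (by rwa [lastAnnFrom_cons]) hrec
    simpa [consEv] using h2

lemma psiD_consEv (b : α) (y : DTF α) :
    psiD (consEv b y) = Sum.inl (b : Tocked α) :: psiD y := by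
  obtain ⟨blocks, s, X⟩ := y
  cases blocks with
  | nil => simp [consEv, psiD]
  | cons p rest => obtain ⟨s', X'⟩ := p; simp [consEv, psiD]

lemma tail_event (prev : Option (Finset (Tocked α))) (a : Tocked α) (ha : a ≠ ⊥)
    {wl wr'} (h : PA ∅ none wl wr') :
    Tail prev (Sum.inr (Sum.inr MSym.comma) :: Sum.inl a :: Sum.inr (Sum.inr MSym.comma) :: wl)
      (Sum.inl a :: wr') := by
  obtain ⟨A', wl', heq, ht⟩ := PA_elim h
  obtain ⟨items, y, hrel, hwl, hwr⟩ := ht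
  obtain ⟨b, rfl⟩ : ∃ b : α, ((b : Tocked α)) = a := WithBot.ne_bot_iff_exists.mp ha
  refine ⟨((b : Tocked α), A') :: items, consEv b y, dtf_consEvent hrel prev b, ?_, ?_⟩
  · rw [itemsEnc_cons, heq, hwl]; simp
  · rw [psiD_consEv, hwr]

lemma tail_tock (prev : Option (Finset (Tocked α))) {lst : List α} {wl wr'}
    (hch : lst.Chain' (· < ·)) (hcompat : refCompatD prev lst.toFinset)
    (h : PA ∅ none wl wr') :
    Tail prev
      (Sum.inr (Sum.inr MSym.comma) :: Sum.inl (⊥ : Tocked α)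
        :: Sum.inr (Sum.inr MSym.comma) :: wl)
      (Sum.inr (Sum.inr MSym.lang) :: (lst.map (fun b => Sum.inr (Sum.inl b)) ++
        Sum.inr (Sum.inr MSym.rang) :: Sum.inl (⊥ : Tocked α) :: wr')) := by
  obtain ⟨A', wl', heq, ht⟩ := PA_elim h
  obtain ⟨items, y, hrel, hwl, hwr⟩ := ht
  obtain ⟨rest, fn⟩ := y
  have h2 := DTFRel.step prev [] A' items [] lst.toFinset rest fn rfl
    (by simpa [lastAnnFrom] using hcompat) hrel
  refine ⟨((⊥ : Tocked α), A') :: items, (([], lst.toFinset) :: rest, fn), by simpa using h2,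
    ?_, ?_⟩
  · rw [itemsEnc_cons, heq, hwl]; simp
  · rw [hwr]
    simp [psiD, encRefD, toFinset_sort_eq hch]

/-- The final-refusal suffix of `psiD`. -/
def finRefW : Option (Finset α) → List (ThetaD α)
  | none => []
  | some Y => encRefD Y

lemma tail_fin (A : Option (Finset (Tocked α))) {X : Option (Finset α)} {wr}
    (hc : annCompatD A X) (hwr : wr = finRefW X) :
    Tail A [Sum.inr (Sum.inr MSym.rang)] wr := by
  refine ⟨[], ([], ([], X)), DTFRel.last A [] [] X rfl (by simpa [lastAnnFrom] using hc),
    by simp, ?_⟩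
  rw [hwr]; cases X <;> simp [psiD, finRefW]

end Stmt14

namespace Stmt14
set_option linter.unusedSectionVars false
set_option maxHeartbeats 1000000
variable {α : Type} [LinearOrder α]

lemma refCompat_of_refOKb (prev : Option (Finset (Tocked α))) {lst : List α}
    (hok : ∀ b ∈ lst, refOKb prev b = true) : refCompatD prev lst.toFinset := by
  cases prev with
  | none => exact trivial
  | some S =>
    intro b hb
    have := hok b (by simpa using hb)
    simpa [refOKb] using this

/-- The state-indexed invariant for the backward direction. -/
def Post : St α → List (Xi (Tocked α)) → List (ThetaD α) → Prop
  | .start, wl, wr => ∃ wl', wl = Sum.inr (Sum.inr MSym.lang) :: wl' ∧ PA ∅ none wl' wr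
  | .ann (some S) last, wl, wr => PA S last wl wr
  | .ann none _, wl, wr => Tail none wl wr
  | .expectEvent, wl, wr => ∃ a wl' wr', a ≠ (⊥ : Tocked α) ∧
      wl = Sum.inl a :: Sum.inr (Sum.inr MSym.comma) :: wl' ∧ wr = Sum.inl a :: wr' ∧
      PA ∅ none wl' wr'
  | .expectTock, wl, wr => ∃ wl' wr',
      wl = Sum.inl (⊥ : Tocked α) :: Sum.inr (Sum.inr MSym.comma) :: wl' ∧
      wr = Sum.inl (⊥ : Tocked α) :: wr' ∧ PA ∅ none wl' wr'
  | .e2 a, wl, wr => ∃ wl' wr', wl = Sum.inr (Sum.inr MSym.comma) :: wl' ∧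
      wr = Sum.inl a :: wr' ∧ PA ∅ none wl' wr'
  | .e3 a, wl, wr => ∃ wr', wr = Sum.inl a :: wr' ∧ PA ∅ none wl wr'
  | .ref A lastX, wl, wr => ∃ (lst : List α) (wl' : List (Xi (Tocked α)))
        (wr' : List (ThetaD α)),
      (∀ c ∈ lastX, ∀ x ∈ lst.head?, c < x) ∧ lst.Chain' (· < ·) ∧
      (∀ b ∈ lst, refOKb A b = true) ∧
      wl = Sum.inr (Sum.inr MSym.comma) :: Sum.inl (⊥ : Tocked α)
        :: Sum.inr (Sum.inr MSym.comma) :: wl' ∧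
      wr = lst.map (fun b => Sum.inr (Sum.inl b)) ++ Sum.inr (Sum.inr MSym.rang)
        :: Sum.inl (⊥ : Tocked α) :: wr' ∧ PA ∅ none wl' wr'
  | .afterRef, wl, wr => ∃ wl' wr',
      wl = Sum.inr (Sum.inr MSym.comma) :: Sum.inl (⊥ : Tocked α)
        :: Sum.inr (Sum.inr MSym.comma) :: wl' ∧
      wr = Sum.inl (⊥ : Tocked α) :: wr' ∧ PA ∅ none wl' wr'
  | .fin A, wl, wr => wl = [] ∧ ∃ X, annCompatD A X ∧ wr = finRefW X
  | .fref S lastX, wl, wr => wl = [] ∧ ∃ lst : List α,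
      (∀ c ∈ lastX, ∀ x ∈ lst.head?, c < x) ∧ lst.Chain' (· < ·) ∧
      (∀ b ∈ lst, (b : Tocked α) ∉ S) ∧
      wr = lst.map (fun b => Sum.inr (Sum.inl b)) ++ [Sum.inr (Sum.inr MSym.rang)]
  | .acc, wl, wr => wl = [] ∧ wr = []

/-- The annotation-exit step: from `Post` at the successor on an exit letter, rebuild `Tail`. -/
lemma tail_exit_comma (prev : Option (Finset (Tocked α))) {wl wr}
    (hp : Post St.expectEvent wl wr) : Tail prev (Sum.inr (Sum.inr MSym.comma) :: wl) wr := by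
  obtain ⟨a, wl', wr', ha, rfl, rfl, hpa⟩ := hp
  exact tail_event prev a ha hpa

lemma tail_exit_rlang (prev : Option (Finset (Tocked α))) {wl wr}
    (hp : Post (St.ref prev none) wl wr) :
    Tail prev wl (Sum.inr (Sum.inr MSym.lang) :: wr) := by
  obtain ⟨lst, wl', wr', _, hch, hok, rfl, rfl, hpa⟩ := hp
  exact tail_tock prev hch (refCompat_of_refOKb prev hok) hpa

lemma tail_exit_rang (prev : Option (Finset (Tocked α))) {wl wr}
    (hp : Post (St.fin prev) wl wr) :
    Tail prev (Sum.inr (Sum.inr MSym.rang) :: wl) wr := by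
  obtain ⟨rfl, X, hc, hwr⟩ := hp
  exact tail_fin prev hc hwr

/-- Package a `Tail` as a `PA` with an empty annotation-extension. -/
lemma PA_of_tail {S : Finset (Tocked α)} {last wl wr} (h : Tail (some S) wl wr) :
    PA S last wl wr :=
  Or.inl ⟨[], wl, by simp, by simp, List.isChain_nil, by simpa using h⟩

lemma back : ∀ (w : List (Xi (Tocked α) ⊕ ThetaD α)) (q qf : St α),
    runO (some q) w = some qf → acceptP qf → Post q (LPr w) (RPr w) := by
  intro w
  induction w with
  | nil =>
    intro q qf h hacc
    obtain rfl : q = qf := Option.some.inj h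
    rcases hacc with rfl | rfl
    · exact ⟨rfl, none, trivial, rfl⟩
    · exact ⟨rfl, rfl⟩
  | cons a w ih =>
    intro q qf h hacc
    rw [runO_cons, Option.bind_some] at h
    cases htr : tr q a with
    | none => rw [htr, runO_none] at h; exact absurd h (by simp)
    | some q' =>
      rw [htr] at h
      have hp := ih q' qf h hacc
      clear ih h hacc
      cases q with
      | start =>
        rcases a with (ev | db | sy) | (rv | pb | sy)
        · exact absurd htr (by simp [tr])
        · exact absurd htr (by simp [tr])
        · cases sy with
          | lang =>
            obtain rfl := Option.some.inj htr
            exact ⟨LPr w, by simp, hp⟩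
          | rang => exact absurd htr (by simp [tr])
          | comma => exact absurd htr (by simp [tr])
          | bullet => exact absurd htr (by simp [tr])
        · exact absurd htr (by simp [tr])
        · exact absurd htr (by simp [tr])
        · cases sy <;> exact absurd htr (by simp [tr])
      | ann A last =>
        rcases a with (ev | db | sy) | (rv | pb | sy)
        · exact absurd htr (by cases A <;> simp [tr])
        · cases A with
          | none => exact absurd htr (by simp [tr])
          | some S =>
            by_cases hcond : optLTb last db = true
            case neg => rw [tr_ann_dbl, if_neg hcond] at htr; exact absurd htr (by simp)
            rw [tr_ann_dbl, if_pos hcond] at htr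
            obtain rfl := Option.some.inj htr
            · have hc := hcond
              have hp' : PA (insert db S) (some db) (LPr w) (RPr w) := hp
              simp only [LPr_cons_inl, RPr_cons_inl]
              rcases hp' with ⟨lst, wl', heq, hhd, hch, htail⟩ | ⟨wl', hS, hlast, _, _⟩
              · refine Or.inl ⟨db :: lst, wl', by simp [heq], ?_, ?_, ?_⟩
                · intro c hc' x hx
                  cases hx
                  cases last with
                  | none => simp at hc'
                  | some c' =>
                    obtain rfl : c' = c := Option.some.inj hc'
                    simpa [optLTb] using hc
                · exact List.isChain_cons.mpr ⟨fun y hy => hhd db rfl y hy, hch⟩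
                · have : S ∪ (db :: lst).toFinset = insert db S ∪ lst.toFinset := by
                    simp [List.toFinset_cons, Finset.union_insert, Finset.insert_union]
                  rwa [this]
              · exact absurd hS (by simp)
        · cases sy with
          | lang => exact absurd htr (by cases A <;> simp [tr])
          | bullet =>
            cases A with
            | none => exact absurd htr (by simp [tr])
            | some S =>
              by_cases hcond : S = ∅ ∧ last = none
              case neg => rw [tr_ann_bullet, if_neg hcond] at htr; exact absurd htr (by simp)
              rw [tr_ann_bullet, if_pos hcond] at htr
              obtain rfl := Option.some.inj htr
              obtain ⟨rfl, rfl⟩ := hcond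
              have hp' : Tail none (LPr w) (RPr w) := hp
              simp only [LPr_cons_inl, RPr_cons_inl]
              exact Or.inr ⟨LPr w, rfl, rfl, rfl, hp'⟩
          | comma =>
            rw [tr_ann_comma] at htr
            obtain rfl := Option.some.inj htr
            simp only [LPr_cons_inl, RPr_cons_inl]
            cases A with
            | none => exact tail_exit_comma none hp
            | some S => exact PA_of_tail (tail_exit_comma (some S) hp)
          | rang =>
            rw [tr_ann_rang] at htr
            obtain rfl := Option.some.inj htr
            simp only [LPr_cons_inl, RPr_cons_inl]
            cases A with
            | none => exact tail_exit_rang none hp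
            | some S => exact PA_of_tail (tail_exit_rang (some S) hp)
        · exact absurd htr (by cases A <;> simp [tr])
        · exact absurd htr (by cases A <;> simp [tr])
        · cases sy with
          | lang =>
            rw [tr_ann_rlang] at htr
            obtain rfl := Option.some.inj htr
            simp only [LPr_cons_inr, RPr_cons_inr]
            cases A with
            | none => exact tail_exit_rlang none hp
            | some S => exact PA_of_tail (tail_exit_rlang (some S) hp)
          | rang => exact absurd htr (by cases A <;> simp [tr])
          | comma => exact absurd htr (by cases A <;> simp [tr])
          | bullet => exact absurd htr (by cases A <;> simp [tr])
      | expectEvent =>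
        rcases a with (ev | db | sy) | (rv | pb | sy)
        · by_cases hcond : ev = ⊥
          case pos => rw [tr_expectEvent, if_pos hcond] at htr; exact absurd htr (by simp)
          rw [tr_expectEvent, if_neg hcond] at htr
          obtain rfl := Option.some.inj htr
          obtain ⟨wl', wr', h1, h2, hpa⟩ := hp
          exact ⟨ev, wl', wr', hcond, by simp [h1], h2, hpa⟩
        · exact absurd htr (by simp [tr])
        · cases sy <;> exact absurd htr (by simp [tr])
        · exact absurd htr (by simp [tr])
        · exact absurd htr (by simp [tr])
        · cases sy <;> exact absurd htr (by simp [tr])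
      | expectTock =>
        rcases a with (ev | db | sy) | (rv | pb | sy)
        · by_cases hcond : ev = ⊥
          case neg => rw [tr_expectTock, if_neg hcond] at htr; exact absurd htr (by simp)
          rw [tr_expectTock, if_pos hcond] at htr
          obtain rfl := Option.some.inj htr
          subst hcond
          obtain ⟨wl', wr', h1, h2, hpa⟩ := hp
          exact ⟨wl', wr', by simp [h1], h2, hpa⟩
        · exact absurd htr (by simp [tr])
        · cases sy <;> exact absurd htr (by simp [tr])
        · exact absurd htr (by simp [tr])
        · exact absurd htr (by simp [tr])
        · cases sy <;> exact absurd htr (by simp [tr])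
      | e2 a0 =>
        rcases a with (ev | db | sy) | (rv | pb | sy)
        · exact absurd htr (by simp [tr])
        · exact absurd htr (by simp [tr])
        · cases sy with
          | comma =>
            rw [tr_e2] at htr
            obtain rfl := Option.some.inj htr
            obtain ⟨wr', h2, hpa⟩ := hp
            exact ⟨LPr w, wr', by simp, h2, hpa⟩
          | lang => exact absurd htr (by simp [tr])
          | rang => exact absurd htr (by simp [tr])
          | bullet => exact absurd htr (by simp [tr])
        · exact absurd htr (by simp [tr])
        · exact absurd htr (by simp [tr])
        · cases sy <;> exact absurd htr (by simp [tr])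
      | e3 a0 =>
        rcases a with (ev | db | sy) | (rv | pb | sy)
        · exact absurd htr (by simp [tr])
        · exact absurd htr (by simp [tr])
        · cases sy <;> exact absurd htr (by simp [tr])
        · by_cases hcond : rv = a0
          case neg => rw [tr_e3, if_neg hcond] at htr; exact absurd htr (by simp)
          rw [tr_e3, if_pos hcond] at htr
          obtain rfl := Option.some.inj htr
          subst hcond
          have hp' : PA ∅ none (LPr w) (RPr w) := hp
          exact ⟨RPr w, by simp, hp'⟩
        · exact absurd htr (by simp [tr])
        · cases sy <;> exact absurd htr (by simp [tr])
      | ref A lastX =>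
        rcases a with (ev | db | sy) | (rv | pb | sy)
        · exact absurd htr (by simp [tr])
        · exact absurd htr (by simp [tr])
        · cases sy <;> exact absurd htr (by simp [tr])
        · exact absurd htr (by simp [tr])
        · by_cases hcond : (optLTb lastX pb && refOKb A pb) = true
          case neg => rw [tr_ref_rp, if_neg hcond] at htr; exact absurd htr (by simp)
          rw [tr_ref_rp, if_pos hcond] at htr
          obtain rfl := Option.some.inj htr
          · simp only [Bool.and_eq_true] at hcond
            obtain ⟨hlt, hok0⟩ := hcond
            obtain ⟨lst, wl', wr', hhd, hch, hok, h1, h2, hpa⟩ := hp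
            refine ⟨pb :: lst, wl', wr', ?_, ?_, ?_, by simpa using h1, by simp [h2], hpa⟩
            · intro c hc' x hx
              cases hx
              cases lastX with
              | none => simp at hc'
              | some c' =>
                obtain rfl : c' = c := Option.some.inj hc'
                simpa [optLTb] using hlt
            · exact List.isChain_cons.mpr ⟨fun y hy => hhd pb rfl y hy, hch⟩
            · intro b hb
              rcases List.mem_cons.mp hb with rfl | hb
              · exact hok0
              · exact hok b hb
        · cases sy with
          | rang =>
            rw [tr_ref_rrang] at htr
            obtain rfl := Option.some.inj htr
            obtain ⟨wl', wr', h1, h2, hpa⟩ := hp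
            exact ⟨[], wl', wr', by simp, List.isChain_nil, by simp, by simpa using h1,
              by simp [h2], hpa⟩
          | lang => exact absurd htr (by simp [tr])
          | comma => exact absurd htr (by simp [tr])
          | bullet => exact absurd htr (by simp [tr])
      | afterRef =>
        rcases a with (ev | db | sy) | (rv | pb | sy)
        · exact absurd htr (by simp [tr])
        · exact absurd htr (by simp [tr])
        · cases sy with
          | comma =>
            rw [tr_afterRef] at htr
            obtain rfl := Option.some.inj htr
            obtain ⟨wl', wr', h1, h2, hpa⟩ := hp
            exact ⟨wl', wr', by simp [h1], h2, hpa⟩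
          | lang => exact absurd htr (by simp [tr])
          | rang => exact absurd htr (by simp [tr])
          | bullet => exact absurd htr (by simp [tr])
        · exact absurd htr (by simp [tr])
        · exact absurd htr (by simp [tr])
        · cases sy <;> exact absurd htr (by simp [tr])
      | fin A =>
        rcases a with (ev | db | sy) | (rv | pb | sy)
        · exact absurd htr (by cases A <;> simp [tr])
        · exact absurd htr (by cases A <;> simp [tr])
        · cases sy <;> exact absurd htr (by cases A <;> simp [tr])
        · exact absurd htr (by cases A <;> simp [tr])
        · exact absurd htr (by cases A <;> simp [tr])
        · cases sy with
          | lang =>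
            cases A with
            | none => exact absurd htr (by simp [tr])
            | some S =>
              rw [tr_fin_rlang] at htr
              obtain rfl := Option.some.inj htr
              obtain ⟨h0, lst, hhd, hch, hnm, h2⟩ := hp
              refine ⟨by simpa using h0, some lst.toFinset, ?_, ?_⟩
              · intro b hb
                exact hnm b (by simpa using hb)
              · simp only [finRefW, encRefD, toFinset_sort_eq hch]
                simp [h2]
          | rang => exact absurd htr (by cases A <;> simp [tr])
          | comma => exact absurd htr (by cases A <;> simp [tr])
          | bullet => exact absurd htr (by cases A <;> simp [tr])
      | fref S lastX =>
        rcases a with (ev | db | sy) | (rv | pb | sy)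
        · exact absurd htr (by simp [tr])
        · exact absurd htr (by simp [tr])
        · cases sy <;> exact absurd htr (by simp [tr])
        · exact absurd htr (by simp [tr])
        · by_cases hcond : (optLTb lastX pb && decide ((pb : Tocked α) ∉ S)) = true
          case neg => rw [tr_fref_rp, if_neg hcond] at htr; exact absurd htr (by simp)
          rw [tr_fref_rp, if_pos hcond] at htr
          obtain rfl := Option.some.inj htr
          · simp only [Bool.and_eq_true] at hcond
            obtain ⟨hlt, hnm0⟩ := hcond
            obtain ⟨h0, lst, hhd, hch, hnm, h2⟩ := hp
            refine ⟨by simpa using h0, pb :: lst, ?_, ?_, ?_, by simp [h2]⟩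
            · intro c hc' x hx
              cases hx
              cases lastX with
              | none => simp at hc'
              | some c' =>
                obtain rfl : c' = c := Option.some.inj hc'
                simpa [optLTb] using hlt
            · exact List.isChain_cons.mpr ⟨fun y hy => hhd pb rfl y hy, hch⟩
            · intro b hb
              rcases List.mem_cons.mp hb with rfl | hb
              · simpa using hnm0
              · exact hnm b hb
        · cases sy with
          | rang =>
            rw [tr_fref_rrang] at htr
            obtain rfl := Option.some.inj htr
            obtain ⟨h0, h2⟩ := hp
            exact ⟨by simpa using h0, [], by simp, List.isChain_nil, by simp, by simp [h2]⟩
          | lang => exact absurd htr (by simp [tr])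
          | comma => exact absurd htr (by simp [tr])
          | bullet => exact absurd htr (by simp [tr])
      | acc =>
        rcases a with (ev | db | sy) | (rv | pb | sy)
        · exact absurd htr (by simp [tr])
        · exact absurd htr (by simp [tr])
        · cases sy <;> exact absurd htr (by simp [tr])
        · exact absurd htr (by simp [tr])
        · exact absurd htr (by simp [tr])
        · cases sy <;> exact absurd htr (by simp [tr])

end Stmt14

namespace Stmt14
set_option linter.unusedSectionVars false
variable {α : Type} [LinearOrder α]

lemma backward_top {w : List (Xi (Tocked α) ⊕ ThetaD α)} {qf : St α}
    (h : runO (some (St.start : St α)) w = some qf) (hacc : acceptP qf) :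
    ∃ (x : FLObs (Tocked α)) (y : DTF α),
      LPr w = phi x ∧ RPr w = psiD y ∧ DTFRel x.1 x.2 y := by
  have hp := back w St.start qf h hacc
  obtain ⟨wl', hwl, hpa⟩ := hp
  obtain ⟨A', wl'', heq, ht⟩ := PA_elim hpa
  obtain ⟨items, y, hrel, hwl2, hwr⟩ := ht
  refine ⟨(A', items), y, ?_, hwr, hrel⟩
  rw [hwl, heq, hwl2]
  simp [phi, itemsEnc]

/-- The NFA over the state type `St α`. -/
def M : NFA (Xi (Tocked α) ⊕ ThetaD α) (St α) where
  step := fun q l => {q' | tr q l = some q'}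
  start := {St.start}
  accept := {q | acceptP q}

lemma evalFrom_eq (w : List (Xi (Tocked α) ⊕ ThetaD α)) :
    ∀ o : Option (St α), M.evalFrom {q | o = some q} w = {q' | runO o w = some q'} := by
  induction w with
  | nil => intro o; rfl
  | cons a w ih =>
    intro o
    have hstep : M.stepSet {q | o = some q} a
        = {q' | (o.bind fun s => tr s a) = some q'} := by
      ext q'
      simp only [NFA.mem_stepSet, Set.mem_setOf_eq]
      cases o with
      | none => simp
      | some q0 =>
        simp only [Option.bind_some]
        constructor
        · rintro ⟨t, ht, h2⟩
          obtain rfl := Option.some.inj ht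
          exact h2
        · intro h2; exact ⟨q0, rfl, h2⟩
    show M.evalFrom (M.stepSet {q | o = some q} a) w = _
    rw [hstep, ih]
    rfl

lemma mem_accepts_iff (w : List (Xi (Tocked α) ⊕ ThetaD α)) :
    w ∈ M.accepts ↔ ∃ qf : St α, runO (some St.start) w = some qf ∧ acceptP qf := by
  have hstart : (M.start : Set (St α)) = {q | (some (St.start : St α)) = some q} := by
    ext q; simp [M, eq_comm]
  constructor
  · rintro ⟨qf, hqf, hev⟩
    rw [show M.eval w = M.evalFrom M.start w from rfl, hstart, evalFrom_eq] at hev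
    exact ⟨qf, hev, hqf⟩
  · rintro ⟨qf, hrun, hacc⟩
    refine ⟨qf, hacc, ?_⟩
    rw [show M.eval w = M.evalFrom M.start w from rfl, hstart, evalFrom_eq]
    exact hrun

end Stmt14


/-- The discrete timed failures model `D` is rational: there is an NFA with finitely
many states over `Ξ ⊕ Θ` recognising `{(φ x, ψ y) : (x, y) ∈ D_Σ}`, where `φ` is the
canonical encoding of finite linear observations over `Σ ∪ {tock}`. -/
theorem stmt14 {α : Type} [Fintype α] [Nonempty α] [LinearOrder α] :
    ∃ (n : ℕ) (A : NFA (Xi (Tocked α) ⊕ ThetaD α) (Fin n)),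
      Recognises A (fun s t => ∃ (x : FLObs (Tocked α)) (y : DTF α),
        s = phi x ∧ t = psiD y ∧ DTFRel x.1 x.2 y) := by
  
  classical
  let e : Stmt14.St α ≃ Fin (Fintype.card (Stmt14.St α)) := Fintype.equivFin _
  refine ⟨Fintype.card (Stmt14.St α),
    { step := fun p l => {p' | Stmt14.tr (e.symm p) l = some (e.symm p')},
      start := {p | e.symm p = Stmt14.St.start},
      accept := {p | Stmt14.acceptP (e.symm p)} }, ?_⟩
  set M' : NFA (Xi (Tocked α) ⊕ ThetaD α) (Fin (Fintype.card (Stmt14.St α))) :=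
    { step := fun p l => {p' | Stmt14.tr (e.symm p) l = some (e.symm p')},
      start := {p | e.symm p = Stmt14.St.start},
      accept := {p | Stmt14.acceptP (e.symm p)} } with hM'
  have hev : ∀ (w : List (Xi (Tocked α) ⊕ ThetaD α)) (S : Set (Stmt14.St α)),
      M'.evalFrom {p | e.symm p ∈ S} w = {p | e.symm p ∈ Stmt14.M.evalFrom S w} := by
    intro w
    induction w with
    | nil => intro S; rfl
    | cons a w ih =>
      intro S
      have hstep : M'.stepSet {p | e.symm p ∈ S} a
          = {p | e.symm p ∈ Stmt14.M.stepSet S a} := by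
        ext p'
        simp only [NFA.mem_stepSet, Set.mem_setOf_eq, hM']
        constructor
        · rintro ⟨p, hp, h2⟩
          exact ⟨e.symm p, hp, h2⟩
        · rintro ⟨q, hq, h2⟩
          exact ⟨e q, by simpa using hq, by simpa [Stmt14.M] using h2⟩
      show M'.evalFrom (M'.stepSet {p | e.symm p ∈ S} a) w = _
      rw [hstep, ih]
      rfl
  have hacc : M'.accepts
      = (Stmt14.M : NFA (Xi (Tocked α) ⊕ ThetaD α) (Stmt14.St α)).accepts := by
    ext w
    constructor
    · rintro ⟨p, hp, hevp⟩
      have : M'.start = {p | e.symm p ∈ Stmt14.M.start} := by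
        ext p; simp [hM', Stmt14.M]
      rw [show M'.eval w = M'.evalFrom M'.start w from rfl, this, hev] at hevp
      exact ⟨e.symm p, hp, hevp⟩
    · rintro ⟨q, hq, hevq⟩
      refine ⟨e q, by simpa [hM', Stmt14.M] using hq, ?_⟩
      have : M'.start = {p | e.symm p ∈ Stmt14.M.start} := by
        ext p; simp [hM', Stmt14.M]
      rw [show M'.eval w = M'.evalFrom M'.start w from rfl, this, hev]
      simpa [NFA.eval] using hevq
  intro s t
  constructor
  · rintro ⟨x, y, rfl, rfl, hrel⟩
    obtain ⟨w, q, hrun, hq, hL, hR⟩ := Stmt14.forward_top hrel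
    refine ⟨w, ?_, hL, hR⟩
    rw [hacc, Stmt14.mem_accepts_iff]
    exact ⟨q, hrun, hq⟩
  · rintro ⟨w, hw, hL, hR⟩
    rw [hacc, Stmt14.mem_accepts_iff] at hw
    obtain ⟨qf, hrun, hqf⟩ := hw
    obtain ⟨x, y, hL', hR', hrel⟩ := Stmt14.backward_top hrun hqf
    exact ⟨x, y, by rw [← hL]; exact hL', by rw [← hR]; exact hR', hrel⟩
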